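/- arXiv:1404.4839 — 3 statements merged into one kernel-verified Lean document; each statement's English description precedes it below -/
import Mathlib

section
/- Let L = S + (1/(2k4))(η1 - η1d)² + (1/(2k5))(ω - ωd)² with time-varying gain k5 > 0. Under the control law u1 = η1d' - k4ξ̄1 - k6(η1 - η1d) and ū2 = ωd' + (k5/k2)·(e2ᵀRᵀξr')/|ξr'| + (k5'/(2k5) - k7)(ω - ωd), together with η1' = u1 and ω' = ū2, the derivative of L equals L̇ = -k1ξ̄1² - (k3/k2)(e2ᵀRᵀξr')² - (k6/k4)(η1 - η1d)² - (k7/k5)(ω - ωd)², which is nonpositive. -/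
open Matrix

/-- The 2x2 rotation matrix by angle θ. -/
noncomputable def Rmat (θ : ℝ) : Matrix (Fin 2) (Fin 2) ℝ :=
  !![Real.cos θ, -Real.sin θ; Real.sin θ, Real.cos θ]

/-- The matrix S = [[0,-1],[1,0]]. -/
def Smat : Matrix (Fin 2) (Fin 2) ℝ := !![0, -1; 1, 0]

/-- e1 = (1,0). -/
def e1 : Fin 2 → ℝ := ![1, 0]

/-- e2 = (0,1). -/
def e2 : Fin 2 → ℝ := ![0, 1]

/-- Euclidean norm on ℝ². -/
noncomputable def enorm2 (v : Fin 2 → ℝ) : ℝ := Real.sqrt (v 0 ^ 2 + v 1 ^ 2)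

/-- Euclidean dot product on ℝ². -/
def dot (a b : Fin 2 → ℝ) : ℝ := a 0 * b 0 + a 1 * b 1

lemma keyAN (n x y u v c sn W : ℝ) (hn : n ≠ 0) (nsq : n^2 = x^2+y^2) :
    ((W*(-sn*x+c*y) + c*u + sn*v) * n - (c*x+sn*y) * ((x*u+y*v)/n)) / n^2
    = -((-sn*x+c*y)/n) * ((x*v - y*u)/n^2 - W) := by
  field_simp
  linear_combination (c*u+sn*v) * nsq

lemma alg (x y u v c sn b1 b2 W H n k1 k2 k3 k4 k5 k5d k6 k7 e1d wd wr u1v u2v hd wdd : ℝ)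
    (hn : n ≠ 0) (hk2 : k2 ≠ 0) (hk4 : k4 ≠ 0) (hk5 : k5 ≠ 0)
    (nsq : n^2 = x^2+y^2)
    (he1d : e1d = (c*x+sn*y) - k1*b1)
    (hwr : wr = -(x*(-v) + y*u)/n^2)
    (hwd : wd = wr - k2*n*b2 + k3*n*(-sn*x+c*y))
    (hu1v : u1v = hd - k4*b1 - k6*(H - e1d))
    (hu2v : u2v = wdd + (k5/k2)*(-sn*x+c*y)/n + (k5d/(2*k5) - k7)*(W - wd)) :
    (b1*(W*b2 + H - (c*x+sn*y)) + b2*(-(W*b1) - (-sn*x+c*y)))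
    + (1/k2)*(-(((W*(-sn*x+c*y)+c*u+sn*v)*n - (c*x+sn*y)*((x*u+y*v)/n))/n^2))
    + (1/(2*k4))*(2*(H-e1d)*(u1v - hd))
    + ((2*(W-wd)*(u2v - wdd))*(2*k5) - (W-wd)^2*(2*k5d))/(2*k5)^2
    = -k1*b1^2 - (k3/k2)*(-sn*x+c*y)^2 - (k6/k4)*(H-e1d)^2 - (k7/k5)*(W-wd)^2 := by
  rw [keyAN n x y u v c sn W hn nsq]
  have hwr' : wr = (x*v - y*u)/n^2 := by rw [hwr]; ring
  subst he1d hu1v hu2v hwd hwr'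
  field_simp
  ring

/-- With L = S + (1/(2k4))(η1 - η1d)² + (1/(2k5))(ω - ωd)²,
under the backstepping control law,
L̇ = -k1ξ̄1² - (k3/k2)(e2ᵀRᵀξr')² - (k6/k4)(η1 - η1d)² - (k7/k5)(ω - ωd)² ≤ 0. -/
theorem stmt10 (ξr ξr' ξr'' ξbar : ℝ → Fin 2 → ℝ) (θ ω η1 : ℝ → ℝ)
    (k1 k2 k4 k6 δr εg : ℝ) (k3 k5 k5' k7 : ℝ → ℝ)
    (hk1 : 0 < k1) (hk2 : 0 < k2) (hk4 : 0 < k4) (hk6 : 0 < k6)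
    (hδr : 0 < δr) (hεg : 0 < εg)
    (hk3 : ∀ t, εg ≤ k3 t) (hk5 : ∀ t, εg ≤ k5 t) (hk7 : ∀ t, εg ≤ k7 t)
    (hk5' : ∀ t, HasDerivAt k5 (k5' t) t)
    (hξr : ∀ t, HasDerivAt ξr (ξr' t) t)
    (hξr' : ∀ t, HasDerivAt ξr' (ξr'' t) t)
    (hbound : ∀ t, δr ≤ enorm2 (ξr' t))
    (hθ : ∀ t, HasDerivAt θ (ω t) t)
    (hξbar : ∀ t, HasDerivAt ξbar
      (-(ω t) • Smat.mulVec (ξbar t) + η1 t • e1 - (Rmat (θ t))ᵀ.mulVec (ξr' t)) t)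
    (η1d η1d' ωr ωd ωd' u1 u2bar : ℝ → ℝ)
    (hη1d : ∀ t, η1d t = dot e1 ((Rmat (θ t))ᵀ.mulVec (ξr' t)) - k1 * ξbar t 0)
    (hωr : ∀ t, ωr t = -(dot (ξr' t) (Smat.mulVec (ξr'' t))) / (enorm2 (ξr' t)) ^ 2)
    (hωd : ∀ t, ωd t = ωr t - k2 * enorm2 (ξr' t) * ξbar t 1 +
      k3 t * enorm2 (ξr' t) * dot e2 ((Rmat (θ t))ᵀ.mulVec (ξr' t)))
    (hη1dDeriv : ∀ t, HasDerivAt η1d (η1d' t) t)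
    (hωdDeriv : ∀ t, HasDerivAt ωd (ωd' t) t)
    (hu1 : ∀ t, u1 t = η1d' t - k4 * ξbar t 0 - k6 * (η1 t - η1d t))
    (hu2 : ∀ t, u2bar t = ωd' t +
      (k5 t / k2) * dot e2 ((Rmat (θ t))ᵀ.mulVec (ξr' t)) / enorm2 (ξr' t) +
      (k5' t / (2 * k5 t) - k7 t) * (ω t - ωd t))
    (hη1 : ∀ t, HasDerivAt η1 (u1 t) t)
    (hω : ∀ t, HasDerivAt ω (u2bar t) t) :
    ∀ t,
      HasDerivAt
        (fun s => (1 / 2) * enorm2 (ξbar s) ^ 2 +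
          (1 / k2) * (1 - dot e1 ((Rmat (θ s))ᵀ.mulVec (ξr' s)) / enorm2 (ξr' s)) +
          (1 / (2 * k4)) * (η1 s - η1d s) ^ 2 +
          (1 / (2 * k5 s)) * (ω s - ωd s) ^ 2)
        (-k1 * (ξbar t 0) ^ 2 -
          (k3 t / k2) * (dot e2 ((Rmat (θ t))ᵀ.mulVec (ξr' t))) ^ 2 -
          (k6 / k4) * (η1 t - η1d t) ^ 2 -
          (k7 t / k5 t) * (ω t - ωd t) ^ 2) t ∧
      (-k1 * (ξbar t 0) ^ 2 -
          (k3 t / k2) * (dot e2 ((Rmat (θ t))ᵀ.mulVec (ξr' t))) ^ 2 -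
          (k6 / k4) * (η1 t - η1d t) ^ 2 -
          (k7 t / k5 t) * (ω t - ωd t) ^ 2) ≤ 0 := by
  intro t
  -- abbreviations
  set x := ξr' t 0 with hxdef
  set y := ξr' t 1 with hydef
  set u := ξr'' t 0 with hudef
  set v := ξr'' t 1 with hvdef
  set c := Real.cos (θ t) with hcdef
  set sn := Real.sin (θ t) with hsndef
  set b1 := ξbar t 0 with hb1def
  set b2 := ξbar t 1 with hb2def
  set W := ω t with hWdef
  set H := η1 t with hHdef
  have hnpos : 0 < enorm2 (ξr' t) := lt_of_lt_of_le hδr (hbound t)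
  set n := enorm2 (ξr' t) with hndef
  have hn : n ≠ 0 := ne_of_gt hnpos
  have nsq : n^2 = x^2 + y^2 := by
    rw [hndef]; unfold enorm2; rw [Real.sq_sqrt (by positivity)]
  have hk2' : k2 ≠ 0 := ne_of_gt hk2
  have hk4' : k4 ≠ 0 := ne_of_gt hk4
  have hk5pos : 0 < k5 t := lt_of_lt_of_le hεg (hk5 t)
  have hk5n : k5 t ≠ 0 := ne_of_gt hk5pos
  -- dot products / matrix computations
  have hdote1 : dot e1 ((Rmat (θ t))ᵀ.mulVec (ξr' t)) = c*x + sn*y := by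
    simp [dot, e1, Rmat, Matrix.mulVec, dotProduct, Fin.sum_univ_two]; rfl
  have hdote2 : dot e2 ((Rmat (θ t))ᵀ.mulVec (ξr' t)) = -sn*x + c*y := by
    simp [dot, e2, Rmat, Matrix.mulVec, dotProduct, Fin.sum_univ_two]; rfl
  have hdotS : dot (ξr' t) (Smat.mulVec (ξr'' t)) = x*(-v) + y*u := by
    simp [dot, Smat, Matrix.mulVec, dotProduct, Fin.sum_univ_two]; rfl
  -- component derivatives of ξbar
  have hb1 : HasDerivAt (fun s => ξbar s 0) (W*b2 + H - (c*x+sn*y)) t := by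
    have h := (hasDerivAt_pi.mp (hξbar t)) 0
    refine h.congr_deriv ?_; symm
    simp [Smat, Rmat, e1, Matrix.mulVec, dotProduct, Fin.sum_univ_two,
      Matrix.transpose, Matrix.vecHead, Matrix.vecTail]; rfl
  have hb2' : HasDerivAt (fun s => ξbar s 1) (-(W*b1) - (-sn*x+c*y)) t := by
    have h := (hasDerivAt_pi.mp (hξbar t)) 1
    refine h.congr_deriv ?_; symm
    simp [Smat, Rmat, e1, Matrix.mulVec, dotProduct, Fin.sum_univ_two,
      Matrix.transpose, Matrix.vecHead, Matrix.vecTail]; rfl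
  have hx : HasDerivAt (fun s => ξr' s 0) u t := (hasDerivAt_pi.mp (hξr' t)) 0
  have hy : HasDerivAt (fun s => ξr' s 1) v t := (hasDerivAt_pi.mp (hξr' t)) 1
  -- A = e1ᵀ Rᵀ ξr'
  have hA : HasDerivAt (fun s => Real.cos (θ s) * ξr' s 0 + Real.sin (θ s) * ξr' s 1)
      (W*(-sn*x+c*y) + c*u + sn*v) t := by
    have h := (((hθ t).cos.mul hx).add ((hθ t).sin.mul hy))
    refine h.congr_deriv ?_; symm
    ring
  -- N = enorm2 ∘ ξr'
  have hq : HasDerivAt (fun s => ξr' s 0 ^ 2 + ξr' s 1 ^ 2) (2*x*u + 2*y*v) t := by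
    have h := (hx.pow 2).add (hy.pow 2)
    refine h.congr_deriv ?_; symm
    ring
  have hN : HasDerivAt (fun s => Real.sqrt (ξr' s 0 ^ 2 + ξr' s 1 ^ 2)) ((x*u+y*v)/n) t := by
    have h0 : (x^2 + y^2) ≠ 0 := by nlinarith [nsq, hnpos]
    have h := (Real.hasDerivAt_sqrt h0).comp t hq
    refine h.congr_deriv ?_; symm
    rw [hndef]
    unfold enorm2
    rw [← hxdef, ← hydef]
    field_simp
  -- piece 1
  have hF1 : HasDerivAt (fun s => (1/2 : ℝ) * (ξbar s 0 ^ 2 + ξbar s 1 ^ 2))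
      (b1*(W*b2 + H - (c*x+sn*y)) + b2*(-(W*b1) - (-sn*x+c*y))) t := by
    have h := ((hb1.pow 2).add (hb2'.pow 2)).const_mul (1/2 : ℝ)
    refine h.congr_deriv ?_; symm
    ring
  -- piece 2
  have hF2 : HasDerivAt (fun s => (1/k2) * (1 -
        (Real.cos (θ s) * ξr' s 0 + Real.sin (θ s) * ξr' s 1) /
          Real.sqrt (ξr' s 0 ^ 2 + ξr' s 1 ^ 2)))
      ((1/k2)*(-(((W*(-sn*x+c*y)+c*u+sn*v)*n - (c*x+sn*y)*((x*u+y*v)/n))/n^2))) t := by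
    have hAN := hA.div hN hn
    have h := (hAN.const_sub 1).const_mul (1/k2)
    refine h.congr_deriv ?_; symm
    rfl
  -- piece 3
  have hF3 : HasDerivAt (fun s => (1/(2*k4)) * (η1 s - η1d s)^2)
      ((1/(2*k4))*(2*(H - η1d t)*(u1 t - η1d' t))) t := by
    have h := (((hη1 t).sub (hη1dDeriv t)).pow 2).const_mul (1/(2*k4))
    refine h.congr_deriv ?_; symm
    simp only [Pi.sub_apply, hHdef]
    ring
  -- piece 4
  have hF4 : HasDerivAt (fun s => (ω s - ωd s)^2 / (2 * k5 s))
      (((2*(W - ωd t)*(u2bar t - ωd' t))*(2*k5 t) - (W - ωd t)^2*(2*k5' t))/(2*k5 t)^2) t := by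
    have hden : (2 : ℝ) * k5 t ≠ 0 := by positivity
    have h := (((hω t).sub (hωdDeriv t)).pow 2).div ((hk5' t).const_mul 2) hden
    refine h.congr_deriv ?_; symm
    simp only [Pi.sub_apply, Pi.mul_apply, Pi.pow_apply, hWdef]
    ring
  have hL := ((hF1.add hF2).add hF3).add hF4
  -- rewrite the statement's function into the canonical form
  have hfun : (fun s => (1 / 2) * enorm2 (ξbar s) ^ 2 +
          (1 / k2) * (1 - dot e1 ((Rmat (θ s))ᵀ.mulVec (ξr' s)) / enorm2 (ξr' s)) +
          (1 / (2 * k4)) * (η1 s - η1d s) ^ 2 +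
          (1 / (2 * k5 s)) * (ω s - ωd s) ^ 2)
      = (fun s => ((1/2 : ℝ) * (ξbar s 0 ^ 2 + ξbar s 1 ^ 2) +
          (1/k2) * (1 - (Real.cos (θ s) * ξr' s 0 + Real.sin (θ s) * ξr' s 1) /
            Real.sqrt (ξr' s 0 ^ 2 + ξr' s 1 ^ 2)) +
          (1/(2*k4)) * (η1 s - η1d s)^2) +
          (ω s - ωd s)^2 / (2 * k5 s)) := by
    funext s
    have h1 : enorm2 (ξbar s) ^ 2 = ξbar s 0 ^ 2 + ξbar s 1 ^ 2 := by
      unfold enorm2; rw [Real.sq_sqrt (by positivity)]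
    have h2 : dot e1 ((Rmat (θ s))ᵀ.mulVec (ξr' s))
        = Real.cos (θ s) * ξr' s 0 + Real.sin (θ s) * ξr' s 1 := by
      simp [dot, e1, Rmat, Matrix.mulVec, dotProduct, Fin.sum_univ_two]
    rw [h1, h2]
    unfold enorm2
    ring
  have hDeq : (b1*(W*b2 + H - (c*x+sn*y)) + b2*(-(W*b1) - (-sn*x+c*y)))
      + (1/k2)*(-(((W*(-sn*x+c*y)+c*u+sn*v)*n - (c*x+sn*y)*((x*u+y*v)/n))/n^2))
      + (1/(2*k4))*(2*(H - η1d t)*(u1 t - η1d' t))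
      + (((2*(W - ωd t)*(u2bar t - ωd' t))*(2*k5 t) - (W - ωd t)^2*(2*k5' t))/(2*k5 t)^2)
      = -k1 * (ξbar t 0) ^ 2 -
          (k3 t / k2) * (dot e2 ((Rmat (θ t))ᵀ.mulVec (ξr' t))) ^ 2 -
          (k6 / k4) * (η1 t - η1d t) ^ 2 -
          (k7 t / k5 t) * (ω t - ωd t) ^ 2 := by
    rw [hdote2]
    exact alg x y u v c sn b1 b2 W H n k1 k2 (k3 t) k4 (k5 t) (k5' t) k6 (k7 t)
      (η1d t) (ωd t) (ωr t) (u1 t) (u2bar t) (η1d' t) (ωd' t)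
      hn hk2' hk4' hk5n nsq
      (by rw [hη1d t, hdote1])
      (by rw [hωr t, hdotS])
      (by rw [hωd t, hdote2])
      (hu1 t)
      (by rw [hu2 t, hdote2])
  constructor
  · rw [hfun]
    rw [← hDeq]
    exact hL
  · have e2sq : (0:ℝ) ≤ (dot e2 ((Rmat (θ t))ᵀ.mulVec (ξr' t))) ^ 2 := sq_nonneg _
    have hk3pos : 0 < k3 t := lt_of_lt_of_le hεg (hk3 t)
    have hk7pos : 0 < k7 t := lt_of_lt_of_le hεg (hk7 t)
    have t1 : 0 ≤ k1 * (ξbar t 0)^2 := by positivity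
    have t2 : 0 ≤ (k3 t / k2) * (dot e2 ((Rmat (θ t))ᵀ.mulVec (ξr' t))) ^ 2 := by positivity
    have t3 : 0 ≤ (k6 / k4) * (η1 t - η1d t) ^ 2 := by positivity
    have t4 : 0 ≤ (k7 t / k5 t) * (ω t - ωd t) ^ 2 := by positivity
    linarith
end

section
/- (Barbalat's lemma) If f : [0,∞) → ℝ is differentiable, f(t) has a finite limit as t → ∞, and f' is uniformly continuous on [0,∞), then f'(t) → 0 as t → ∞. -/
/-- Barbalat's lemma: If f : [0,∞) → ℝ is differentiable,
f(t) has a finite limit as t → ∞, and f' is uniformly continuous on [0,∞),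
then f'(t) → 0 as t → ∞. -/
theorem stmt11 (f f' : ℝ → ℝ) (L : ℝ)
    (hderiv : ∀ t ∈ Set.Ici (0 : ℝ), HasDerivWithinAt f (f' t) (Set.Ici 0) t)
    (hlim : Filter.Tendsto f Filter.atTop (nhds L))
    (huc : UniformContinuousOn f' (Set.Ici 0)) :
    Filter.Tendsto f' Filter.atTop (nhds 0) := by
  rw [Metric.tendsto_atTop]
  by_contra h
  push_neg at h
  obtain ⟨ε, hε, hfreq⟩ := h
  obtain ⟨δ, hδ, hδprop⟩ := (Metric.uniformContinuousOn_iff.mp huc) (ε / 2) (by linarith)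
  rw [Metric.tendsto_atTop] at hlim
  obtain ⟨N, hN⟩ := hlim (ε * δ / 8) (by positivity)
  obtain ⟨t, ht, hft⟩ := hfreq (max N 1)
  have ht1 : (1 : ℝ) ≤ t := le_trans (le_max_right N 1) ht
  have htN : N ≤ t := le_trans (le_max_left N 1) ht
  set b := t + δ / 2 with hb
  have htb : t < b := by simp only [hb]; linarith
  have hcont : ContinuousOn f (Set.Icc t b) := fun x hx =>
    ((hderiv x (Set.mem_Ici.mpr (by linarith [hx.1]))).continuousWithinAt).mono
      (fun y hy => Set.mem_Ici.mpr (by linarith [hy.1]))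
  have hdAt : ∀ x ∈ Set.Ioo t b, HasDerivAt f (f' x) x := fun x hx =>
    (hderiv x (Set.mem_Ici.mpr (by linarith [hx.1]))).hasDerivAt
      (Ici_mem_nhds (by linarith [hx.1]))
  obtain ⟨c, hc, hceq⟩ := exists_hasDerivAt_eq_slope f f' htb hcont hdAt
  have hbt : b - t = δ / 2 := by simp [hb]
  have hfb : f b - f t = f' c * (δ / 2) := by
    have : f' c * (b - t) = f b - f t := by
      field_simp [hbt] at hceq
      rw [hceq, div_mul_cancel₀ _ (ne_of_gt (by linarith))]
    rw [hbt] at this; linarith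
  have hdist : dist (f' c) (f' t) < ε / 2 := by
    apply hδprop c (Set.mem_Ici.mpr (by linarith [hc.1])) t (Set.mem_Ici.mpr (by linarith))
    rw [Real.dist_eq, abs_of_pos (by linarith [hc.1])]
    have := hc.2
    simp only [hb] at this
    linarith
  have hft' : ε ≤ |f' t| := by
    rw [Real.dist_eq, sub_zero] at hft; exact hft
  have hfc : ε / 2 < |f' c| := by
    rw [Real.dist_eq] at hdist
    have h1 := abs_sub_abs_le_abs_sub (f' t) (f' c)
    rw [abs_sub_comm] at h1
    linarith
  have hlow : ε * δ / 4 < |f b - f t| := by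
    rw [hfb, abs_mul, abs_of_pos (by linarith : (0:ℝ) < δ / 2)]
    calc ε * δ / 4 = (ε / 2) * (δ / 2) := by ring
    _ < |f' c| * (δ / 2) := by
        apply mul_lt_mul_of_pos_right hfc; linarith
  have hhigh : |f b - f t| < ε * δ / 4 := by
    have h1 := hN b (by simp only [hb]; linarith)
    have h2 := hN t htN
    rw [Real.dist_eq] at h1 h2
    calc |f b - f t| = |(f b - L) - (f t - L)| := by ring_nf
    _ ≤ |f b - L| + |f t - L| := abs_sub _ _
    _ < ε * δ / 4 := by linarith
  linarith
end

section
/- The 3x3 matrix A2 = [[0, s, 0], [-k2·s, -k3·s², 1], [0, -k5/k2, -k7]] with s > 0 and k2, k3, k5, k7 > 0 is Hurwitz provided (k3s² + k7)(k3k7s² + k5/k2 + k2s²) > s²k2k7. -/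
open Polynomial

/-- Routh–Hurwitz for a monic cubic. -/
lemma cubic_hurwitz (a b c : ℝ) (ha : 0 < a) (hb : 0 < b) (hc : 0 < c)
    (hab : c < a * b) (z : ℂ)
    (hz : z ^ 3 + (a : ℂ) * z ^ 2 + (b : ℂ) * z + (c : ℂ) = 0) : z.re < 0 := by
  by_contra h
  push_neg at h
  have h1 := congrArg Complex.re hz
  have h2 := congrArg Complex.im hz
  simp only [pow_succ, pow_zero, one_mul, Complex.add_re, Complex.add_im,
    Complex.mul_re, Complex.mul_im, Complex.ofReal_re, Complex.ofReal_im,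
    Complex.zero_re, Complex.zero_im, zero_mul, mul_zero, sub_zero, zero_sub,
    zero_add, add_zero] at h1 h2
  rcases eq_or_ne z.im 0 with hy0 | hy0
  · rw [hy0] at h1
    nlinarith [mul_nonneg (mul_nonneg h h) h, mul_nonneg h h, mul_nonneg ha.le (mul_nonneg h h),
      mul_nonneg hb.le h]
  · have h2' : z.im * (3 * z.re ^ 2 - z.im ^ 2 + 2 * a * z.re + b) = 0 := by ring_nf; ring_nf at h2; linarith
    have key : 3 * z.re ^ 2 - z.im ^ 2 + 2 * a * z.re + b = 0 :=
      (mul_eq_zero.mp h2').resolve_left hy0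
    nlinarith [mul_nonneg (mul_nonneg h h) h, mul_nonneg h h,
      mul_nonneg ha.le (mul_nonneg h h), mul_nonneg ha.le h,
      mul_nonneg (mul_nonneg ha.le ha.le) h, mul_nonneg hb.le h]

/-- The matrix A2. -/
noncomputable def A2mat (s k2 k3 k5 k7 : ℝ) : Matrix (Fin 3) (Fin 3) ℝ :=
  !![0, s, 0; -k2 * s, -k3 * s ^ 2, 1; 0, -k5 / k2, -k7]

lemma A2mat_charpoly (s k2 k3 k5 k7 : ℝ) :
    (A2mat s k2 k3 k5 k7).charpoly =
      X ^ 3 + C (k3 * s ^ 2 + k7) * X ^ 2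
        + C (k3 * k7 * s ^ 2 + k5 / k2 + k2 * s ^ 2) * X + C (s ^ 2 * k2 * k7) := by
  rw [Matrix.charpoly, Matrix.det_fin_three]
  simp [A2mat, Matrix.charmatrix_apply, Matrix.diagonal]
  rw [neg_div, map_neg]; ring

/-- With s > 0 and k2, k3, k5, k7 > 0, A2 is Hurwitz provided
(k3s² + k7)(k3k7s² + k5/k2 + k2s²) > s²k2k7. -/
theorem stmt16 (s k2 k3 k5 k7 : ℝ) (hs : 0 < s)
    (hk2 : 0 < k2) (hk3 : 0 < k3) (hk5 : 0 < k5) (hk7 : 0 < k7)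
    (hRH : (k3 * s ^ 2 + k7) * (k3 * k7 * s ^ 2 + k5 / k2 + k2 * s ^ 2) >
      s ^ 2 * k2 * k7) :
    ∀ z : ℂ, Polynomial.aeval z
      (((A2mat s k2 k3 k5 k7).charpoly).map (algebraMap ℝ ℂ)) = 0 → z.re < 0 := by
  intro z hz
  rw [Polynomial.aeval_map_algebraMap, A2mat_charpoly] at hz
  simp only [map_add, map_mul, map_pow, aeval_X, aeval_C] at hz
  refine cubic_hurwitz _ _ _ (by positivity) (by positivity) (by positivity) hRH z ?_
  simpa [Algebra.algebraMap_eq_smul_one, Complex.real_smul] using hz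
end
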